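/- Full loss of a misspecified-prior predictor: under the meta-learning data generating assumptions, let ν be a probability measure on (𝒳^T)^M with ν({h}) > 0 whenever ℙ(H_{M,T} = h) > 0, and for each (m,t) let Q_{m,t}(h) be the ν-conditional law of the next token given the history h (the Bayesian posterior predictive under the alternative joint law ν). Then for every m ∈ {1,…,M}, (1/(MT)) Σ_{m'=1}^{M} Σ_{t=0}^{T−1} E[−ln Q_{m',t}(H_{m',t})(X^{(m')}_{t+1})] = H[H_{M,T} | θ_{1:M}]/(MT) + I[H_{M,T} ; ψ]/(MT) + I[D_m ; θ_m | ψ]/T + d_KL( ℙ-law of H_{M,T} ‖ ν )/(MT). (Paper: the appendix Corollary characterizing the loss of a predictor performing Bayesian inference under an arbitrary prior.) -/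

import Mathlib

open MeasureTheory ProbabilityTheory Real

variable {Ω : Type*} [MeasureSpace Ω]

noncomputable def prob {𝒳 : Type*} (X : Ω → 𝒳) (x : 𝒳) : ℝ :=
  (ℙ (X ⁻¹' {x})).toReal

noncomputable def entropy {𝒳 : Type*} [Fintype 𝒳] (X : Ω → 𝒳) : ℝ :=
  -∑ x, prob X x * Real.log (prob X x)

noncomputable def condEntropy {𝒳 𝒴 : Type*} [Fintype 𝒳] [Fintype 𝒴]
    (X : Ω → 𝒳) (Y : Ω → 𝒴) : ℝ :=
  entropy (fun ω => (X ω, Y ω)) - entropy Y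

noncomputable def mutualInfo {𝒳 𝒴 : Type*} [Fintype 𝒳] [Fintype 𝒴]
    (X : Ω → 𝒳) (Y : Ω → 𝒴) : ℝ :=
  entropy X + entropy Y - entropy (fun ω => (X ω, Y ω))

noncomputable def condMutualInfo {𝒳 𝒴 𝒵 : Type*} [Fintype 𝒳] [Fintype 𝒴] [Fintype 𝒵]
    (X : Ω → 𝒳) (Y : Ω → 𝒴) (Z : Ω → 𝒵) : ℝ :=
  entropy (fun ω => (X ω, Z ω)) + entropy (fun ω => (Y ω, Z ω))
    - entropy (fun ω => (X ω, Y ω, Z ω)) - entropy Z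

def hist {𝒳 : Type*} {T : ℕ} (X : Fin T → Ω → 𝒳) (t : ℕ) (ht : t ≤ T) : Ω → (Fin t → 𝒳) :=
  fun ω i => X (Fin.castLE ht i) ω



set_option linter.unusedSectionVars false
set_option linter.unusedVariables false
section metaHelpers
open scoped Classical
section helpers
open scoped Classical
variable {Ω : Type*} [MeasureSpace Ω] [IsProbabilityMeasure (ℙ : Measure Ω)]
variable {γ : Type*} [Fintype γ] [MeasurableSpace γ] [MeasurableSingletonClass γ]

lemma prob_nonneg' {𝒳 : Type*} (X : Ω → 𝒳) (x : 𝒳) : 0 ≤ prob X x := ENNReal.toReal_nonneg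

lemma sum_prob (Z : Ω → γ) (hZ : Measurable Z) : ∑ z, prob Z z = 1 := by
  have h := MeasureTheory.sum_measure_preimage_singleton (μ := (ℙ : Measure Ω))
    (Finset.univ : Finset γ) (f := Z) (fun y _ => hZ (measurableSet_singleton y))
  have h2 : Z ⁻¹' ↑(Finset.univ : Finset γ) = Set.univ := by simp
  rw [h2, measure_univ] at h
  unfold prob
  rw [← ENNReal.toReal_sum (fun a _ => measure_ne_top _ _), h, ENNReal.toReal_one]

lemma prob_comp {δ : Type*} [DecidableEq δ] (Z : Ω → γ) (hZ : Measurable Z) (f : γ → δ) (y : δ) :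
    prob (fun ω => f (Z ω)) y = ∑ z, if f z = y then prob Z z else 0 := by
  have h2 : (fun ω => f (Z ω)) ⁻¹' {y} = Z ⁻¹' ↑(Finset.univ.filter (fun z => f z = y)) := by
    ext ω; simp
  have h := MeasureTheory.sum_measure_preimage_singleton (μ := (ℙ : Measure Ω))
    (Finset.univ.filter (fun z => f z = y)) (f := Z)
    (fun y _ => hZ (measurableSet_singleton y))
  unfold prob
  rw [h2, ← h, ENNReal.toReal_sum (fun a _ => measure_ne_top _ _), Finset.sum_filter]

lemma integral_comp (Z : Ω → γ) (hZ : Measurable Z) (F : γ → ℝ) :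
    ∫ ω, F (Z ω) ∂ℙ = ∑ z, prob Z z * F z := by
  have hmap : IsProbabilityMeasure (Measure.map Z ℙ) := Measure.isProbabilityMeasure_map hZ.aemeasurable
  rw [← MeasureTheory.integral_map hZ.aemeasurable
      (measurable_of_countable F).aestronglyMeasurable,
    MeasureTheory.integral_fintype (Integrable.of_finite)]
  refine Finset.sum_congr rfl fun z _ => ?_
  rw [measureReal_def, Measure.map_apply hZ (measurableSet_singleton z)]
  simp [prob, mul_comm]

end helpers

section algebra
variable {γ δ : Type*} [Fintype γ] [Fintype δ]

lemma gibbs_eq (p b : γ → ℝ) (hp : ∀ w, 0 ≤ p w) (hb : ∀ w, 0 ≤ b w)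
    (hdom : ∀ w, 0 < p w → 0 < b w)
    (hsum : ∑ w, b w = ∑ w, p w)
    (hzero : ∑ w, p w * Real.log (p w / b w) = 0) :
    ∀ w, p w = b w := by
  classical
  have key : ∀ w, p w * Real.log (p w / b w) - (p w - b w)
      = p w * Real.log (p w / b w) - (p w - b w) := fun _ => rfl
  have hlogflip : ∀ w, 0 < p w → Real.log (p w / b w) = - Real.log (b w / p w) := by
    intro w hw
    rw [← Real.log_inv]
    congr 1
    rw [inv_div]
  have hge : ∀ w, 0 ≤ p w * Real.log (p w / b w) - (p w - b w) := by
    intro w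
    rcases eq_or_lt_of_le (hp w) with h|h
    · simp [← h, hb w]
    · have hbw := hdom w h
      have hlog : Real.log (b w / p w) ≤ b w / p w - 1 :=
        Real.log_le_sub_one_of_pos (div_pos hbw h)
      have h2 : p w * Real.log (b w / p w) ≤ p w * (b w / p w - 1) :=
        mul_le_mul_of_nonneg_left hlog h.le
      have h3 : p w * (b w / p w - 1) = b w - p w := by field_simp
      rw [hlogflip w h]
      nlinarith
  have hsz : ∑ w, (p w * Real.log (p w / b w) - (p w - b w)) = 0 := by
    rw [Finset.sum_sub_distrib, Finset.sum_sub_distrib, hzero, hsum]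
    ring
  have heach : ∀ w ∈ Finset.univ, p w * Real.log (p w / b w) - (p w - b w) = 0 :=
    (Finset.sum_eq_zero_iff_of_nonneg (fun w _ => hge w)).mp hsz
  intro w
  have hw0 := heach w (Finset.mem_univ w)
  rcases eq_or_lt_of_le (hp w) with h|h
  · simp [← h] at hw0 ⊢
    linarith
  · have hbw := hdom w h
    by_contra hne
    have hratio : b w / p w ≠ 1 := by
      intro hc
      exact hne (by field_simp at hc; linarith)
    have hlt : Real.log (b w / p w) < b w / p w - 1 :=
      Real.log_lt_sub_one_of_pos (div_pos hbw h) hratio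
    have h2 : p w * Real.log (b w / p w) < p w * (b w / p w - 1) :=
      (mul_lt_mul_iff_right₀ h).mpr hlt
    have h3 : p w * (b w / p w - 1) = b w - p w := by field_simp
    rw [hlogflip w h] at hw0
    nlinarith

lemma mul_log_expand (a b : ℝ) (ha : 0 ≤ a) (hb : 0 ≤ b) :
    (a * b) * Real.log (a * b) = b * (a * Real.log a) + a * b * Real.log b := by
  rcases eq_or_lt_of_le ha with h|h
  · simp [← h]
  rcases eq_or_lt_of_le hb with h'|h'
  · simp [← h']
  rw [Real.log_mul h.ne' h'.ne']
  ring

lemma esplit2 (ρ : γ → ℝ) (f : γ → δ → ℝ) (hρ : ∀ s, 0 ≤ ρ s) (hf : ∀ s d, 0 ≤ f s d)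
    (hnorm : ∀ s, 0 < ρ s → ∑ d, f s d = 1) :
    -∑ s, ∑ d, (ρ s * f s d) * Real.log (ρ s * f s d)
      = (-∑ s, ρ s * Real.log (ρ s)) + -(∑ s, ∑ d, ρ s * f s d * Real.log (f s d)) := by
  have key : ∀ s, ∑ d, (ρ s * f s d) * Real.log (ρ s * f s d)
      = ρ s * Real.log (ρ s) + ∑ d, ρ s * f s d * Real.log (f s d) := by
    intro s
    rcases eq_or_lt_of_le (hρ s) with h|h
    · simp [← h]
    · rw [Finset.sum_congr rfl (fun d _ => mul_log_expand (ρ s) (f s d) (hρ s) (hf s d)),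
        Finset.sum_add_distrib, ← Finset.sum_mul, hnorm s h, one_mul]
  rw [Finset.sum_congr rfl (fun s _ => key s), Finset.sum_add_distrib]
  ring

lemma marg_pi {M : ℕ} (f : Fin M → δ → ℝ) (G : δ → ℝ) (m : Fin M) :
    ∑ h : Fin M → δ, (∏ k, f k (h k)) * G (h m)
      = (∑ d, f m d * G d) * ∏ k ∈ Finset.univ.erase m, (∑ d, f k d) := by
  classical
  set F : Fin M → δ → ℝ := fun k => if k = m then (fun d => f m d * G d) else f k with hF
  have h1 : ∀ h : Fin M → δ, (∏ k, f k (h k)) * G (h m) = ∏ k, F k (h k) := by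
    intro h
    rw [← Finset.mul_prod_erase Finset.univ (fun k => F k (h k)) (Finset.mem_univ m),
        ← Finset.mul_prod_erase Finset.univ (fun k => f k (h k)) (Finset.mem_univ m)]
    have h2 : ∏ k ∈ Finset.univ.erase m, F k (h k) = ∏ k ∈ Finset.univ.erase m, f k (h k) :=
      Finset.prod_congr rfl (fun k hk => by simp [hF, (Finset.mem_erase.mp hk).1])
    rw [h2]
    simp only [hF, if_pos rfl]
    ring
  rw [Finset.sum_congr rfl (fun h _ => h1 h), ← Fintype.prod_sum F,
      ← Finset.mul_prod_erase Finset.univ (fun k => ∑ d, F k d) (Finset.mem_univ m)]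
  simp only [hF, if_pos rfl]
  congr 1
  exact Finset.prod_congr rfl fun k hk => by simp [(Finset.mem_erase.mp hk).1]

lemma log_expand_prod {M : ℕ} (a : ℝ) (g : Fin M → ℝ) (ha : 0 ≤ a) (hg : ∀ k, 0 ≤ g k) :
    (a * ∏ k, g k) * Real.log (a * ∏ k, g k)
      = (∏ k, g k) * (a * Real.log a) + ∑ m, (a * ∏ k, g k) * Real.log (g m) := by
  by_cases ha0 : a = 0
  · simp [ha0]
  by_cases hg0 : ∃ k, g k = 0
  · obtain ⟨k, hk⟩ := hg0
    have hp : ∏ k, g k = 0 := Finset.prod_eq_zero (Finset.mem_univ k) hk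
    simp [hp]
  push_neg at hg0
  rw [Real.log_mul ha0 (Finset.prod_ne_zero_iff.mpr (fun k _ => hg0 k)),
    Real.log_prod (fun k _ => hg0 k), mul_add, Finset.mul_sum]
  ring

lemma esplit_key {M : ℕ} (ρs : ℝ) (f : Fin M → δ → ℝ) (hρ : 0 ≤ ρs) (hf : ∀ m d, 0 ≤ f m d)
    (hnorm : ∀ m, ∑ d, f m d = 1) :
    ∑ h : Fin M → δ, (ρs * ∏ k, f k (h k)) * Real.log (ρs * ∏ k, f k (h k))
      = ρs * Real.log ρs + ∑ m : Fin M, ∑ d, ρs * f m d * Real.log (f m d) := by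
  have hA : ∀ h : Fin M → δ, (ρs * ∏ k, f k (h k)) * Real.log (ρs * ∏ k, f k (h k))
      = (∏ k, f k (h k)) * (ρs * Real.log ρs)
        + ∑ m, (ρs * ∏ k, f k (h k)) * Real.log (f m (h m)) :=
    fun h => log_expand_prod ρs (fun k => f k (h k)) hρ (fun k => hf k (h k))
  rw [Finset.sum_congr rfl (fun h _ => hA h), Finset.sum_add_distrib]
  congr 1
  · rw [← Finset.sum_mul, ← Fintype.prod_sum (fun k d => f k d)]
    simp [hnorm]
  · rw [Finset.sum_comm]
    refine Finset.sum_congr rfl fun m _ => ?_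
    have h5 : ∀ h : Fin M → δ, (ρs * ∏ k, f k (h k)) * Real.log (f m (h m))
        = (∏ k, f k (h k)) * Real.log (f m (h m)) * ρs := fun h => by ring
    rw [Finset.sum_congr rfl (fun h _ => h5 h), ← Finset.sum_mul]
    have h6 : ∀ h : Fin M → δ, (∏ k, f k (h k)) * Real.log (f m (h m))
        = (∏ k, f k (h k)) * (fun d => Real.log (f m d)) (h m) := fun h => rfl
    rw [Finset.sum_congr rfl (fun h _ => h6 h), marg_pi f (fun d => Real.log (f m d)) m]
    have h7 : ∏ k ∈ Finset.univ.erase m, (∑ d, f k d) = 1 :=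
      Finset.prod_eq_one (fun k _ => hnorm k)
    rw [h7, mul_one, Finset.sum_mul]
    exact Finset.sum_congr rfl fun d _ => by ring

lemma ite_all_prod {M : ℕ} (p : Fin M → Prop) [DecidablePred p] (c : ℝ) :
    (if (∀ k, p k) then c else 0) = c * ∏ k, (if p k then (1:ℝ) else 0) := by
  by_cases h : ∀ k, p k
  · simp [h]
  · push_neg at h
    obtain ⟨k, hk⟩ := h
    have hz : (∏ k, (if p k then (1:ℝ) else 0)) = 0 :=
      Finset.prod_eq_zero (Finset.mem_univ k) (by simp [hk])
    rw [if_neg (fun hall => hk (hall k)), hz, mul_zero]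

end algebra

section algebra2
open scoped Classical
variable {γ δ : Type*} [Fintype γ] [Fintype δ]

lemma esplitPi {M : ℕ} (ρ : γ → ℝ) (f : Fin M → γ → δ → ℝ)
    (hρ : ∀ s, 0 ≤ ρ s) (hf : ∀ m s d, 0 ≤ f m s d)
    (hnorm : ∀ s, 0 < ρ s → ∀ m, ∑ d, f m s d = 1) :
    -∑ s, ∑ h : Fin M → δ, (ρ s * ∏ k, f k s (h k)) * Real.log (ρ s * ∏ k, f k s (h k))
      = (-∑ s, ρ s * Real.log (ρ s))
        + ∑ m : Fin M, -(∑ s, ∑ d, ρ s * f m s d * Real.log (f m s d)) := by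
  have key : ∀ s, ∑ h : Fin M → δ, (ρ s * ∏ k, f k s (h k)) * Real.log (ρ s * ∏ k, f k s (h k))
      = ρ s * Real.log (ρ s) + ∑ m : Fin M, ∑ d, ρ s * f m s d * Real.log (f m s d) := by
    intro s
    rcases eq_or_lt_of_le (hρ s) with h|h
    · simp [← h]
    · exact esplit_key (ρ s) (fun m => f m s) (hρ s) (fun m d => hf m s d) (hnorm s h)
  rw [Finset.sum_congr rfl fun s _ => key s, Finset.sum_add_distrib, neg_add, Finset.sum_comm]
  congr 1
  rw [← Finset.sum_neg_distrib]

end algebra2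

section marg
open scoped Classical
variable {Ψ E F : Type*} [Fintype Ψ] [Fintype E] [Fintype F] {M : ℕ}

lemma margA [DecidableEq F] [DecidableEq Ψ] (P : Ψ × (Fin M → E) → ℝ) (r : Ψ → ℝ) (κs : Ψ → E → ℝ)
    (hP : ∀ s v, P (s, v) = r s * ∏ k, κs s (v k))
    (f1 : E → F) (y : Fin M → F) (s : Ψ) :
    (∑ z : Ψ × (Fin M → E), if ((fun k => f1 (z.2 k)), z.1) = (y, s) then P z else 0)
      = r s * ∏ k, (∑ u, if f1 u = y k then κs s u else 0) := by
  rw [Fintype.sum_prod_type]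
  have h1 : ∀ (s' : Ψ) (v : Fin M → E),
      (if ((fun k => f1 (v k)), s') = (y, s) then P (s', v) else 0)
      = if s' = s then (r s' * ∏ k, (κs s' (v k) * if f1 (v k) = y k then 1 else 0)) else 0 := by
    intro s' v
    by_cases hs : s' = s
    · subst hs
      rw [if_pos rfl]
      by_cases hv : ∀ k, f1 (v k) = y k
      · rw [if_pos (by rw [funext hv]), hP]
        congr 1
        exact Finset.prod_congr rfl fun k _ => by rw [if_pos (hv k), mul_one]
      · obtain ⟨k, hk⟩ := not_forall.mp hv
        rw [if_neg, Finset.prod_eq_zero (Finset.mem_univ k) (by rw [if_neg hk, mul_zero]),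
          mul_zero]
        intro hc
        exact hk (congrFun (congrArg Prod.fst hc) k)
    · rw [if_neg hs, if_neg]
      intro hc
      exact hs (congrArg Prod.snd hc)
  rw [Finset.sum_congr rfl fun s' _ => Finset.sum_congr rfl fun v _ => h1 s' v]
  have h2 : ∀ s' : Ψ, (∑ v : Fin M → E,
      if s' = s then (r s' * ∏ k, (κs s' (v k) * if f1 (v k) = y k then 1 else 0)) else 0)
      = if s' = s then (r s' * ∑ v : Fin M → E,
          ∏ k, (κs s' (v k) * if f1 (v k) = y k then 1 else 0)) else 0 := by
    intro s'
    split_ifs with h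
    · rw [← Finset.mul_sum]
    · simp
  rw [Finset.sum_congr rfl fun s' _ => h2 s', Finset.sum_ite_eq' Finset.univ s,
    if_pos (Finset.mem_univ s),
    ← Fintype.prod_sum (fun k u => κs s u * if f1 u = y k then 1 else 0)]
  congr 1
  exact Finset.prod_congr rfl fun k _ =>
    Finset.sum_congr rfl fun u _ => by rw [mul_ite, mul_one, mul_zero]

lemma margB1 [DecidableEq F] (P : Ψ × (Fin M → E) → ℝ) (r : Ψ → ℝ) (κs : Ψ → E → ℝ)
    (hP : ∀ s v, P (s, v) = r s * ∏ k, κs s (v k))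
    (f1 : E → F) (y : Fin M → F) :
    (∑ z : Ψ × (Fin M → E), if (fun k => f1 (z.2 k)) = y then P z else 0)
      = ∑ s, r s * ∏ k, (∑ u, if f1 u = y k then κs s u else 0) := by
  rw [Fintype.sum_prod_type]
  refine Finset.sum_congr rfl fun s _ => ?_
  have h1 : ∀ v : Fin M → E,
      (if (fun k => f1 (v k)) = y then P (s, v) else 0)
      = r s * ∏ k, (κs s (v k) * if f1 (v k) = y k then 1 else 0) := by
    intro v
    by_cases hv : ∀ k, f1 (v k) = y k
    · rw [if_pos (funext hv), hP]
      congr 1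
      exact Finset.prod_congr rfl fun k _ => by rw [if_pos (hv k), mul_one]
    · obtain ⟨k, hk⟩ := not_forall.mp hv
      rw [if_neg, Finset.prod_eq_zero (Finset.mem_univ k) (by rw [if_neg hk, mul_zero]),
        mul_zero]
      intro hc
      exact hk (congrFun hc k)
  rw [Finset.sum_congr rfl fun v _ => h1 v, ← Finset.mul_sum,
    ← Fintype.prod_sum (fun k u => κs s u * if f1 u = y k then 1 else 0)]
  congr 1
  exact Finset.prod_congr rfl fun k _ =>
    Finset.sum_congr rfl fun u _ => by rw [mul_ite, mul_one, mul_zero]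

lemma margB2 {F' : Type*} [DecidableEq F] [DecidableEq F'] (P : Ψ × (Fin M → E) → ℝ) (r : Ψ → ℝ) (κs : Ψ → E → ℝ)
    (hP : ∀ s v, P (s, v) = r s * ∏ k, κs s (v k))
    (f1 : E → F) (f2 : E → F') (y1 : Fin M → F) (y2 : Fin M → F') :
    (∑ z : Ψ × (Fin M → E),
        if ((fun k => f1 (z.2 k)), (fun k => f2 (z.2 k))) = (y1, y2) then P z else 0)
      = ∑ s, r s * ∏ k, (∑ u, if f1 u = y1 k ∧ f2 u = y2 k then κs s u else 0) := by
  rw [Fintype.sum_prod_type]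
  refine Finset.sum_congr rfl fun s _ => ?_
  have h1 : ∀ v : Fin M → E,
      (if ((fun k => f1 (v k)), (fun k => f2 (v k))) = (y1, y2) then P (s, v) else 0)
      = r s * ∏ k, (κs s (v k) * if f1 (v k) = y1 k ∧ f2 (v k) = y2 k then 1 else 0) := by
    intro v
    by_cases hv : ∀ k, f1 (v k) = y1 k ∧ f2 (v k) = y2 k
    · rw [if_pos, hP]
      · congr 1
        exact Finset.prod_congr rfl fun k _ => by rw [if_pos (hv k), mul_one]
      · exact Prod.ext (funext fun k => (hv k).1) (funext fun k => (hv k).2)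
    · obtain ⟨k, hk⟩ := not_forall.mp hv
      rw [if_neg, Finset.prod_eq_zero (Finset.mem_univ k) (by rw [if_neg hk, mul_zero]),
        mul_zero]
      intro hc
      exact hk ⟨congrFun (congrArg Prod.fst hc) k, congrFun (congrArg Prod.snd hc) k⟩
  rw [Finset.sum_congr rfl fun v _ => h1 v, ← Finset.mul_sum,
    ← Fintype.prod_sum (fun k u => κs s u * if f1 u = y1 k ∧ f2 u = y2 k then 1 else 0)]
  congr 1
  exact Finset.prod_congr rfl fun k _ =>
    Finset.sum_congr rfl fun u _ => by rw [mul_ite, mul_one, mul_zero]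

lemma margC (m : Fin M) (P : Ψ × (Fin M → E) → ℝ) (r : Ψ → ℝ) (κs : Ψ → E → ℝ)
    (hP : ∀ s v, P (s, v) = r s * ∏ k, κs s (v k))
    (hnorm : ∀ s, ∑ u, κs s u = 1)
    (p : Ψ → Prop) (q : E → Prop) [DecidablePred p] [DecidablePred q] :
    (∑ z : Ψ × (Fin M → E), if p z.1 ∧ q (z.2 m) then P z else 0)
      = ∑ s, (if p s then r s * (∑ u, if q u then κs s u else 0) else 0) := by
  rw [Fintype.sum_prod_type]
  refine Finset.sum_congr rfl fun s _ => ?_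
  by_cases hp : p s
  · simp only [hp, true_and, if_pos]
    have h1 : ∀ v : Fin M → E, (if q (v m) then P (s, v) else 0)
        = (∏ k, κs s (v k)) * ((if q (v m) then (1:ℝ) else 0) * r s) := by
      intro v
      by_cases hq : q (v m)
      · rw [if_pos hq, if_pos hq, hP]; ring
      · rw [if_neg hq, if_neg hq]; ring
    rw [Finset.sum_congr rfl fun v _ => h1 v]
    have h2 : ∀ v : Fin M → E, (∏ k, κs s (v k)) * ((if q (v m) then (1:ℝ) else 0) * r s)
        = ((∏ k, (fun _ : Fin M => κs s) k (v k)) * (fun u => (if q u then (1:ℝ) else 0) * r s) (v m)) := fun v => rfl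
    rw [Finset.sum_congr rfl fun v _ => h2 v,
      marg_pi (fun _ => κs s) (fun u => (if q u then (1:ℝ) else 0) * r s) m]
    have h3 : ∏ k ∈ Finset.univ.erase m, (∑ d, κs s d) = 1 :=
      Finset.prod_eq_one fun k _ => hnorm s
    rw [h3, mul_one, Finset.mul_sum]
    exact Finset.sum_congr rfl fun u _ => by by_cases hq : q u <;> simp [hq] <;> ring
  · simp only [hp, false_and, if_neg, if_false]
    simp


end marg

end metaHelpers

/-- Kullback–Leibler divergence (natural log) between two pmfs on a finite type,
given as real-valued functions. -/
noncomputable def klFin {α : Type*} [Fintype α] (p q : α → ℝ) : ℝ :=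
  ∑ x, p x * Real.log (p x / q x)

/-- **Full loss of a misspecified-prior predictor** (paper, appendix Corollary).
Under the meta-learning data generating assumptions, let `ν` be an alternative law on the
token array `(𝒳^T)^M` whose singletons dominate the true law of `H_{M,T}`, and let the
predictor at each `(m', t)` be the `ν`-conditional law of the next token given the realized
history `H_{m',t}`.  Then its average expected log-loss equals
`H[H_{M,T}|θ_{1:M}]/(MT) + I[H_{M,T};ψ]/(MT) + I[D_m;θ_m|ψ]/T + d_KL(law(H_{M,T}) ‖ ν)/(MT)`. -/
theorem misspecified_prior_full_loss
    {Ω : Type*} [MeasureSpace Ω] [IsProbabilityMeasure (ℙ : Measure Ω)]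
    {𝒳 Θ Ψ : Type*} [Fintype 𝒳] [Nonempty 𝒳] [Fintype Θ] [Nonempty Θ]
    [Fintype Ψ] [Nonempty Ψ]
    [MeasurableSpace 𝒳] [MeasurableSingletonClass 𝒳]
    [MeasurableSpace Θ] [MeasurableSingletonClass Θ]
    [MeasurableSpace Ψ] [MeasurableSingletonClass Ψ]
    (M T : ℕ) (hM : 1 ≤ M) (hT : 1 ≤ T)
    (ψ : Ω → Ψ) (θ : Fin M → Ω → Θ) (X : Fin M → Fin T → Ω → 𝒳)
    (hψ : Measurable ψ) (hθ : ∀ m, Measurable (θ m)) (hX : ∀ m t, Measurable (X m t))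
    -- (i) conditioned on ψ, the pairs (θ_m, D_m) are i.i.d.
    (hiid : ∃ κ : Ψ → Θ × (Fin T → 𝒳) → ℝ,
      (∀ s u, 0 ≤ κ s u) ∧ (∀ s, ∑ u, κ s u = 1) ∧
      ∀ (s : Ψ) (v : Fin M → Θ × (Fin T → 𝒳)),
        prob (fun ω => (ψ ω, fun m => (θ m ω, fun t => X m t ω))) (s, v)
          = prob ψ s * ∏ m, κ s (v m))
    -- (ii) the meta-parameter carries no extra information about D_m beyond θ_m
    (hCI : ∀ m : Fin M, condMutualInfo (fun ω (t : Fin T) => X m t ω) ψ (θ m) = 0)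
    (m : Fin M)
    (ν : Measure (Fin M → Fin T → 𝒳)) [IsProbabilityMeasure ν]
    (hsupp : ∀ h : Fin M → Fin T → 𝒳,
      0 < prob (fun ω (m' : Fin M) (t : Fin T) => X m' t ω) h → 0 < ν {h}) :
    (1 / ((M : ℝ) * T)) * ∑ m' : Fin M, ∑ t : Fin T,
        ∫ ω, -Real.log
          ((ν {g : Fin M → Fin T → 𝒳 |
                ((∀ j : Fin M, j < m' → ∀ s : Fin T, g j s = X j s ω) ∧
                 (∀ s : Fin T, s < t → g m' s = X m' s ω)) ∧
                g m' t = X m' t ω}).toReal /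
           (ν {g : Fin M → Fin T → 𝒳 |
                (∀ j : Fin M, j < m' → ∀ s : Fin T, g j s = X j s ω) ∧
                (∀ s : Fin T, s < t → g m' s = X m' s ω)}).toReal) ∂ℙ
      = condEntropy (fun ω (m' : Fin M) (t : Fin T) => X m' t ω)
          (fun ω (m' : Fin M) => θ m' ω) / ((M : ℝ) * T)
        + mutualInfo (fun ω (m' : Fin M) (t : Fin T) => X m' t ω) ψ / ((M : ℝ) * T)
        + condMutualInfo (fun ω (t : Fin T) => X m t ω) (θ m) ψ / T
        + klFin (fun h => prob (fun ω (m' : Fin M) (t : Fin T) => X m' t ω) h)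
            (fun h => (ν {h}).toReal) / ((M : ℝ) * T) := by
  classical
  haveI : DecidableEq 𝒳 := Classical.decEq _
  haveI : DecidableEq Θ := Classical.decEq _
  haveI : DecidableEq Ψ := Classical.decEq _
  obtain ⟨κ, hκ0, hκ1, hκ⟩ := hiid
  have hM0 : (0:ℝ) < (M:ℝ) := by exact_mod_cast Nat.lt_of_lt_of_le Nat.zero_lt_one hM
  have hT0 : (0:ℝ) < (T:ℝ) := by exact_mod_cast Nat.lt_of_lt_of_le Nat.zero_lt_one hT
  set Harr : Ω → Fin M → Fin T → 𝒳 := fun ω m' t => X m' t ω with hHarrdef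
  set Dm : Ω → Fin T → 𝒳 := fun ω t => X m t ω with hDmdef
  set θv : Ω → Fin M → Θ := fun ω m' => θ m' ω with hθvdef
  set W : Ω → Ψ × (Fin M → Θ × (Fin T → 𝒳)) :=
    fun ω => (ψ ω, fun k => (θ k ω, fun t => X k t ω)) with hWdef
  have hWm : Measurable W :=
    hψ.prodMk (measurable_pi_lambda _ fun k =>
      ((hθ k).prodMk (measurable_pi_lambda _ fun t => hX k t)))
  have hHm : Measurable Harr :=
    measurable_pi_lambda _ fun k => measurable_pi_lambda _ fun t => hX k t
  set r : Ψ → ℝ := fun s => prob ψ s with hrdef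
  have hr0 : ∀ s, 0 ≤ r s := fun s => prob_nonneg' ψ s
  have hrsum : ∑ s, r s = 1 := sum_prob ψ hψ
  set κθ : Ψ → Θ → ℝ := fun s a => ∑ d, κ s (a, d) with hκθdef
  set κD : Ψ → (Fin T → 𝒳) → ℝ := fun s d => ∑ a, κ s (a, d) with hκDdef
  have hκθ0 : ∀ s a, 0 ≤ κθ s a := fun s a => Finset.sum_nonneg fun d _ => hκ0 s (a, d)
  have hκD0 : ∀ s d, 0 ≤ κD s d := fun s d => Finset.sum_nonneg fun a _ => hκ0 s (a, d)
  have hκθ1 : ∀ s, ∑ a, κθ s a = 1 := by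
    intro s
    rw [hκθdef, ← hκ1 s, Fintype.sum_prod_type]
  have hκD1 : ∀ s, ∑ d, κD s d = 1 := by
    intro s
    rw [hκDdef, ← hκ1 s, Fintype.sum_prod_type]
    exact Finset.sum_comm
  have hκθle : ∀ s a, κθ s a ≤ 1 := by
    intro s a
    rw [← hκθ1 s]
    exact Finset.single_le_sum (fun a' _ => hκθ0 s a') (Finset.mem_univ a)
  have hpW : ∀ s v, prob W (s, v) = r s * ∏ k, κ s (v k) := hκ
  set P1 : Θ → ℝ := fun a => ∑ s, r s * κθ s a with hP1def
  set piT : Θ → (Fin T → 𝒳) → ℝ := fun a d => ∑ s, r s * κ s (a, d) with hpiTdef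
  set gf : Θ → (Fin T → 𝒳) → ℝ := fun a d => piT a d / P1 a with hgfdef
  set Pθ : (Fin M → Θ) → ℝ := fun a => ∑ s, r s * ∏ k, κθ s (a k) with hPθdef
  have hP10 : ∀ a, 0 ≤ P1 a := fun a =>
    Finset.sum_nonneg fun s _ => mul_nonneg (hr0 s) (hκθ0 s a)
  have hpiT0 : ∀ a d, 0 ≤ piT a d := fun a d =>
    Finset.sum_nonneg fun s _ => mul_nonneg (hr0 s) (hκ0 s (a, d))
  have hgf0 : ∀ a d, 0 ≤ gf a d := fun a d => div_nonneg (hpiT0 a d) (hP10 a)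
  have hPθ0 : ∀ a, 0 ≤ Pθ a := fun a => Finset.sum_nonneg fun s _ =>
    mul_nonneg (hr0 s) (Finset.prod_nonneg fun k _ => hκθ0 s (a k))
  have hpiTsum : ∀ a, ∑ d, piT a d = P1 a := by
    intro a
    rw [hpiTdef, hP1def]
    rw [Finset.sum_comm]
    exact Finset.sum_congr rfl fun s _ => by rw [← Finset.mul_sum, hκθdef]
  -- marginal probability formulas
  have pa : ∀ (h : Fin M → Fin T → 𝒳) (s : Ψ),
      prob (fun ω => (Harr ω, ψ ω)) (h, s) = r s * ∏ k, κD s (h k) := by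
    intro h s
    have key2 : prob (fun ω => (Harr ω, ψ ω)) (h, s)
        = r s * ∏ k, (∑ u : Θ × (Fin T → 𝒳), if u.2 = h k then κ s u else 0) :=
      (prob_comp W hWm (fun z => ((fun k => (z.2 k).2 : Fin M → Fin T → 𝒳), z.1)) (h, s)).trans
        (margA (prob W) r κ hpW (fun u => u.2) h s)
    rw [key2]
    congr 1
    refine Finset.prod_congr rfl fun k _ => ?_
    show _ = ∑ a : Θ, κ s (a, h k)
    simp only [Fintype.sum_prod_type]
    exact Finset.sum_congr rfl fun a _ => by simp
  have pb : ∀ a : Fin M → Θ, prob θv a = Pθ a := by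
    intro a
    have key2 : prob θv a
        = ∑ s, r s * ∏ k, (∑ u : Θ × (Fin T → 𝒳), if u.1 = a k then κ s u else 0) :=
      (prob_comp W hWm (fun z => (fun k => (z.2 k).1 : Fin M → Θ)) a).trans
        (margB1 (prob W) r κ hpW (fun u => u.1) a)
    rw [key2]
    show _ = ∑ s, r s * ∏ k, κθ s (a k)
    refine Finset.sum_congr rfl fun s _ => ?_
    congr 1
    refine Finset.prod_congr rfl fun k _ => ?_
    show _ = ∑ d, κ s (a k, d)
    simp only [Fintype.sum_prod_type]
    rw [Finset.sum_comm]
    exact Finset.sum_congr rfl fun d _ => by simp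
  have pc : ∀ (h : Fin M → Fin T → 𝒳) (a : Fin M → Θ),
      prob (fun ω => (Harr ω, θv ω)) (h, a) = ∑ s, r s * ∏ k, κ s (a k, h k) := by
    intro h a
    have key2 : prob (fun ω => (Harr ω, θv ω)) (h, a)
        = ∑ s, r s * ∏ k,
            (∑ u : Θ × (Fin T → 𝒳), if u.2 = h k ∧ u.1 = a k then κ s u else 0) :=
      (prob_comp W hWm
        (fun z => ((fun k => (z.2 k).2 : Fin M → Fin T → 𝒳), (fun k => (z.2 k).1 : Fin M → Θ)))
        (h, a)).trans
        (margB2 (prob W) r κ hpW (fun u => u.2) (fun u => u.1) h a)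
    rw [key2]
    refine Finset.sum_congr rfl fun s _ => ?_
    congr 1
    refine Finset.prod_congr rfl fun k _ => ?_
    simp only [Fintype.sum_prod_type]
    rw [Finset.sum_comm]
    have hinner : ∀ d : Fin T → 𝒳,
        (∑ a' : Θ, if d = h k ∧ a' = a k then κ s (a', d) else 0)
          = if d = h k then κ s (a k, d) else 0 := by
      intro d
      by_cases hd : d = h k
      · simp [hd]
      · simp [hd]
    rw [Finset.sum_congr rfl fun d _ => hinner d]
    simp
  have pd : ∀ (d : Fin T → 𝒳) (a : Θ),
      prob (fun ω => (Dm ω, θ m ω)) (d, a) = piT a d := by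
    intro d a
    have key2 : prob (fun ω => (Dm ω, θ m ω)) (d, a)
        = ∑ z : Ψ × (Fin M → Θ × (Fin T → 𝒳)),
            if ((z.2 m).2, (z.2 m).1) = (d, a) then prob W z else 0 :=
      prob_comp W hWm (fun z => ((z.2 m).2, (z.2 m).1)) (d, a)
    rw [key2, Finset.sum_congr rfl fun z _ => if_congr
        (show (((z.2 m).2, (z.2 m).1) = (d, a)) ↔ (True ∧ ((z.2 m).2 = d ∧ (z.2 m).1 = a)) from by simp only [Prod.mk.injEq, true_and]; try tauto) rfl rfl,
      margC m (prob W) r κ hpW hκ1 (fun s' => True) (fun u => u.2 = d ∧ u.1 = a)]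
    show _ = ∑ s, r s * κ s (a, d)
    refine Finset.sum_congr rfl fun s _ => ?_
    rw [if_pos trivial]
    congr 1
    simp only [Fintype.sum_prod_type]
    have hinner : ∀ a' : Θ,
        (∑ d' : Fin T → 𝒳, if d' = d ∧ a' = a then κ s (a', d') else 0)
          = if a' = a then κ s (a', d) else 0 := by
      intro a'
      by_cases ha : a' = a
      · simp [ha]
      · simp [ha]
    rw [Finset.sum_congr rfl fun a' _ => hinner a']
    simp
  have pe : ∀ (s : Ψ) (a : Θ),
      prob (fun ω => (ψ ω, θ m ω)) (s, a) = r s * κθ s a := by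
    intro s a
    have key2 : prob (fun ω => (ψ ω, θ m ω)) (s, a)
        = ∑ z : Ψ × (Fin M → Θ × (Fin T → 𝒳)),
            if (z.1, (z.2 m).1) = (s, a) then prob W z else 0 :=
      prob_comp W hWm (fun z => (z.1, (z.2 m).1)) (s, a)
    rw [key2, Finset.sum_congr rfl fun z _ => if_congr
        (show ((z.1, (z.2 m).1) = (s, a)) ↔ (z.1 = s ∧ (z.2 m).1 = a) from by simp only [Prod.mk.injEq, true_and]; try tauto) rfl rfl,
      margC m (prob W) r κ hpW hκ1 (fun s' => s' = s) (fun u => u.1 = a)]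
    rw [Fintype.sum_ite_eq' s]
    congr 1
    show _ = ∑ d : Fin T → 𝒳, κ s (a, d)
    simp only [Fintype.sum_prod_type]
    rw [Finset.sum_comm]
    exact Finset.sum_congr rfl fun d _ => by simp
  have pf : ∀ (d : Fin T → 𝒳) (s : Ψ) (a : Θ),
      prob (fun ω => (Dm ω, ψ ω, θ m ω)) (d, s, a) = r s * κ s (a, d) := by
    intro d s a
    have key2 : prob (fun ω => (Dm ω, ψ ω, θ m ω)) (d, s, a)
        = ∑ z : Ψ × (Fin M → Θ × (Fin T → 𝒳)),
            if ((z.2 m).2, z.1, (z.2 m).1) = (d, s, a) then prob W z else 0 :=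
      prob_comp W hWm (fun z => ((z.2 m).2, z.1, (z.2 m).1)) (d, s, a)
    rw [key2, Finset.sum_congr rfl fun z _ => if_congr
        (show (((z.2 m).2, z.1, (z.2 m).1) = (d, s, a)) ↔ (z.1 = s ∧ ((z.2 m).2 = d ∧ (z.2 m).1 = a)) from by simp only [Prod.mk.injEq, true_and]; try tauto) rfl rfl,
      margC m (prob W) r κ hpW hκ1 (fun s' => s' = s) (fun u => u.2 = d ∧ u.1 = a)]
    rw [Fintype.sum_ite_eq' s]
    congr 1
    simp only [Fintype.sum_prod_type]
    have hinner : ∀ a' : Θ,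
        (∑ d' : Fin T → 𝒳, if d' = d ∧ a' = a then κ s (a', d') else 0)
          = if a' = a then κ s (a', d) else 0 := by
      intro a'
      by_cases ha : a' = a
      · simp [ha]
      · simp [ha]
    rw [Finset.sum_congr rfl fun a' _ => hinner a']
    simp
  have pg : ∀ a : Θ, prob (θ m) a = P1 a := by
    intro a
    have key2 : prob (fun ω => θ m ω) a
        = ∑ z : Ψ × (Fin M → Θ × (Fin T → 𝒳)),
            if (z.2 m).1 = a then prob W z else 0 :=
      prob_comp W hWm (fun z => (z.2 m).1) a
    rw [key2, Finset.sum_congr rfl fun z _ => if_congr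
        (show ((z.2 m).1 = a) ↔ (True ∧ (z.2 m).1 = a) from by simp only [Prod.mk.injEq, true_and]; try tauto) rfl rfl,
      margC m (prob W) r κ hpW hκ1 (fun s' => True) (fun u => u.1 = a)]
    show _ = ∑ s, r s * κθ s a
    refine Finset.sum_congr rfl fun s _ => ?_
    rw [if_pos trivial]
    congr 1
    show _ = ∑ d, κ s (a, d)
    simp only [Fintype.sum_prod_type]
    rw [Finset.sum_comm]
    exact Finset.sum_congr rfl fun d _ => by simp
  have ph : ∀ (d : Fin T → 𝒳) (s : Ψ),
      prob (fun ω => (Dm ω, ψ ω)) (d, s) = r s * κD s d := by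
    intro d s
    have key2 : prob (fun ω => (Dm ω, ψ ω)) (d, s)
        = ∑ z : Ψ × (Fin M → Θ × (Fin T → 𝒳)),
            if ((z.2 m).2, z.1) = (d, s) then prob W z else 0 :=
      prob_comp W hWm (fun z => ((z.2 m).2, z.1)) (d, s)
    rw [key2, Finset.sum_congr rfl fun z _ => if_congr
        (show (((z.2 m).2, z.1) = (d, s)) ↔ (z.1 = s ∧ (z.2 m).2 = d) from by simp only [Prod.mk.injEq, true_and]; try tauto) rfl rfl,
      margC m (prob W) r κ hpW hκ1 (fun s' => s' = s) (fun u => u.2 = d)]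
    rw [Fintype.sum_ite_eq' s]
    congr 1
    show _ = ∑ a' : Θ, κ s (a', d)
    simp only [Fintype.sum_prod_type]
    exact Finset.sum_congr rfl fun a' _ => by simp
  have pi' : ∀ (a : Θ) (s : Ψ),
      prob (fun ω => (θ m ω, ψ ω)) (a, s) = r s * κθ s a := by
    intro a s
    have key2 : prob (fun ω => (θ m ω, ψ ω)) (a, s)
        = ∑ z : Ψ × (Fin M → Θ × (Fin T → 𝒳)),
            if ((z.2 m).1, z.1) = (a, s) then prob W z else 0 :=
      prob_comp W hWm (fun z => ((z.2 m).1, z.1)) (a, s)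
    rw [key2, Finset.sum_congr rfl fun z _ => if_congr
        (show (((z.2 m).1, z.1) = (a, s)) ↔ (z.1 = s ∧ (z.2 m).1 = a) from by simp only [Prod.mk.injEq, true_and]; try tauto) rfl rfl,
      margC m (prob W) r κ hpW hκ1 (fun s' => s' = s) (fun u => u.1 = a)]
    rw [Fintype.sum_ite_eq' s]
    congr 1
    show _ = ∑ d : Fin T → 𝒳, κ s (a, d)
    simp only [Fintype.sum_prod_type]
    rw [Finset.sum_comm]
    exact Finset.sum_congr rfl fun d _ => by simp
  have pj : ∀ (d : Fin T → 𝒳) (a : Θ) (s : Ψ),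
      prob (fun ω => (Dm ω, θ m ω, ψ ω)) (d, a, s) = r s * κ s (a, d) := by
    intro d a s
    have key2 : prob (fun ω => (Dm ω, θ m ω, ψ ω)) (d, a, s)
        = ∑ z : Ψ × (Fin M → Θ × (Fin T → 𝒳)),
            if ((z.2 m).2, (z.2 m).1, z.1) = (d, a, s) then prob W z else 0 :=
      prob_comp W hWm (fun z => ((z.2 m).2, (z.2 m).1, z.1)) (d, a, s)
    rw [key2, Finset.sum_congr rfl fun z _ => if_congr
        (show (((z.2 m).2, (z.2 m).1, z.1) = (d, a, s)) ↔ (z.1 = s ∧ ((z.2 m).2 = d ∧ (z.2 m).1 = a)) from by simp only [Prod.mk.injEq, true_and]; try tauto) rfl rfl,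
      margC m (prob W) r κ hpW hκ1 (fun s' => s' = s) (fun u => u.2 = d ∧ u.1 = a)]
    rw [Fintype.sum_ite_eq' s]
    congr 1
    simp only [Fintype.sum_prod_type]
    have hinner : ∀ a' : Θ,
        (∑ d' : Fin T → 𝒳, if d' = d ∧ a' = a then κ s (a', d') else 0)
          = if a' = a then κ s (a', d) else 0 := by
      intro a'
      by_cases ha : a' = a
      · simp [ha]
      · simp [ha]
    rw [Finset.sum_congr rfl fun a' _ => hinner a']
    simp
  -- factorization from conditional independence
  have hfact : ∀ s, 0 < r s → ∀ a d, κ s (a, d) = κθ s a * gf a d := by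
    -- Gibbs argument from hCI
    set q : (Fin T → 𝒳) × Ψ × Θ → ℝ := fun w => r w.2.1 * κ w.2.1 (w.2.2, w.1) with hqdef
    set bb : (Fin T → 𝒳) × Ψ × Θ → ℝ :=
      fun w => piT w.2.2 w.1 * (r w.2.1 * κθ w.2.1 w.2.2) / P1 w.2.2 with hbbdef
    have hq0 : ∀ w, 0 ≤ q w := fun w => mul_nonneg (hr0 _) (hκ0 _ _)
    have hb0 : ∀ w, 0 ≤ bb w := fun w =>
      div_nonneg (mul_nonneg (hpiT0 _ _) (mul_nonneg (hr0 _) (hκθ0 _ _))) (hP10 _)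
    have hqle : ∀ d s a, r s * κ s (a, d) ≤ piT a d := by
      intro d s a
      exact Finset.single_le_sum
        (f := fun s' => r s' * κ s' (a, d))
        (fun s' _ => mul_nonneg (hr0 s') (hκ0 s' (a, d))) (Finset.mem_univ s)
    have hκleκθ : ∀ s a d, κ s (a, d) ≤ κθ s a := by
      intro s a d
      exact Finset.single_le_sum (f := fun d' => κ s (a, d'))
        (fun d' _ => hκ0 s (a, d')) (Finset.mem_univ d)
    have hμleP1 : ∀ s a, r s * κθ s a ≤ P1 a := by
      intro s a
      exact Finset.single_le_sum (f := fun s' => r s' * κθ s' a)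
        (fun s' _ => mul_nonneg (hr0 s') (hκθ0 s' a)) (Finset.mem_univ s)
    have hposall : ∀ d s a, 0 < q (d, s, a) →
        0 < r s ∧ 0 < κ s (a, d) ∧ 0 < piT a d ∧ 0 < r s * κθ s a ∧ 0 < P1 a := by
      intro d s a hw
      have hrκ : 0 < r s ∧ 0 < κ s (a, d) := by
        rcases mul_pos_iff.mp hw with hx|hx
        · exact hx
        · exact absurd hx.1 (not_lt.mpr (hr0 s))
      have hπ : 0 < piT a d := lt_of_lt_of_le hw (hqle d s a)
      have hμ : 0 < r s * κθ s a :=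
        mul_pos hrκ.1 (lt_of_lt_of_le hrκ.2 (hκleκθ s a d))
      exact ⟨hrκ.1, hrκ.2, hπ, hμ, lt_of_lt_of_le hμ (hμleP1 s a)⟩
    have hdom : ∀ w, 0 < q w → 0 < bb w := by
      rintro ⟨d, s, a⟩ hw
      obtain ⟨h1, h2, h3, h4, h5⟩ := hposall d s a hw
      exact div_pos (mul_pos h3 h4) h5
    have hP1sum : ∑ a, P1 a = 1 := by
      rw [show (∑ a, P1 a) = ∑ a, ∑ s, r s * κθ s a from rfl, Finset.sum_comm]
      rw [show (∑ s, ∑ a, r s * κθ s a) = ∑ s, r s from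
        Finset.sum_congr rfl fun s _ => by rw [← Finset.mul_sum, hκθ1 s, mul_one]]
      exact hrsum
    have hqsum : ∑ w, q w = 1 := by
      simp only [Fintype.sum_prod_type]
      rw [show (∑ d : Fin T → 𝒳, ∑ s, ∑ a, q (d, s, a)) = ∑ s, ∑ d : Fin T → 𝒳, ∑ a, q (d, s, a)
        from Finset.sum_comm]
      rw [show (∑ s, ∑ d : Fin T → 𝒳, ∑ a, q (d, s, a)) = ∑ s, r s from ?_]
      · exact hrsum
      refine Finset.sum_congr rfl fun s _ => ?_
      rw [show (∑ d : Fin T → 𝒳, ∑ a, q (d, s, a)) = ∑ d : Fin T → 𝒳, ∑ a, r s * κ s (a, d)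
        from rfl, Finset.sum_comm]
      rw [show (∑ a, ∑ d, r s * κ s (a, d)) = ∑ a, r s * κθ s a from
        Finset.sum_congr rfl fun a _ => by rw [← Finset.mul_sum]]
      rw [← Finset.mul_sum, hκθ1 s, mul_one]
    have hbsum : ∑ w, bb w = ∑ w, q w := by
      rw [hqsum]
      simp only [Fintype.sum_prod_type]
      rw [show (∑ d : Fin T → 𝒳, ∑ s, ∑ a, bb (d, s, a))
          = ∑ a, ∑ d : Fin T → 𝒳, ∑ s, bb (d, s, a) from by
        rw [show (∑ d : Fin T → 𝒳, ∑ s, ∑ a, bb (d, s, a))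
            = ∑ d : Fin T → 𝒳, ∑ a, ∑ s, bb (d, s, a) from
          Finset.sum_congr rfl fun d _ => Finset.sum_comm]
        exact Finset.sum_comm]
      rw [show (∑ a, ∑ d : Fin T → 𝒳, ∑ s, bb (d, s, a)) = ∑ a, P1 a from ?_]
      · exact hP1sum
      refine Finset.sum_congr rfl fun a _ => ?_
      rcases eq_or_lt_of_le (hP10 a) with h0|h0
      · have hz : ∀ s, r s * κθ s a = 0 := by
          intro s
          have := (Finset.sum_eq_zero_iff_of_nonneg
            (fun s' (_ : s' ∈ Finset.univ) => mul_nonneg (hr0 s') (hκθ0 s' a))).mp h0.symm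
          exact this s (Finset.mem_univ s)
        rw [show (∑ d : Fin T → 𝒳, ∑ s, bb (d, s, a)) = 0 from by
          refine Finset.sum_eq_zero fun d _ => Finset.sum_eq_zero fun s _ => ?_
          show piT a d * (r s * κθ s a) / P1 a = 0
          rw [hz s, mul_zero, zero_div]]
        exact h0
      · have h1 : ∀ d : Fin T → 𝒳, (∑ s, bb (d, s, a)) = piT a d / P1 a * (∑ s, r s * κθ s a) := by
          intro d
          rw [Finset.mul_sum]
          refine Finset.sum_congr rfl fun s _ => ?_
          show piT a d * (r s * κθ s a) / P1 a = piT a d / P1 a * (r s * κθ s a)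
          ring
        rw [Finset.sum_congr rfl fun d _ => h1 d]
        rw [show (∑ s, r s * κθ s a) = P1 a from rfl]
        rw [show (∑ d : Fin T → 𝒳, piT a d / P1 a * P1 a)
            = ∑ d : Fin T → 𝒳, piT a d from
          Finset.sum_congr rfl fun d _ => div_mul_cancel₀ _ h0.ne']
        exact hpiTsum a
    -- rewrite hCI m into Gibbs form
    have hCIm := hCI m
    rw [condMutualInfo] at hCIm
    have e1 : entropy (fun ω => (Dm ω, θ m ω))
        = -∑ d : Fin T → 𝒳, ∑ a, piT a d * Real.log (piT a d) := by
      simp only [entropy, Fintype.sum_prod_type]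
      exact congrArg Neg.neg (Finset.sum_congr rfl fun d _ =>
        Finset.sum_congr rfl fun a _ => by rw [pd d a])
    have e2 : entropy (fun ω => (ψ ω, θ m ω))
        = -∑ s, ∑ a, (r s * κθ s a) * Real.log (r s * κθ s a) := by
      simp only [entropy, Fintype.sum_prod_type]
      exact congrArg Neg.neg (Finset.sum_congr rfl fun s _ =>
        Finset.sum_congr rfl fun a _ => by rw [pe s a])
    have e3 : entropy (fun ω => (Dm ω, ψ ω, θ m ω))
        = -∑ d : Fin T → 𝒳, ∑ s, ∑ a, q (d, s, a) * Real.log (q (d, s, a)) := by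
      simp only [entropy, Fintype.sum_prod_type]
      exact congrArg Neg.neg (Finset.sum_congr rfl fun d _ => Finset.sum_congr rfl fun s _ =>
        Finset.sum_congr rfl fun a _ => by rw [pf d s a])
    have e4 : entropy (θ m) = -∑ a, P1 a * Real.log (P1 a) := by
      simp only [entropy]
      exact congrArg Neg.neg (Finset.sum_congr rfl fun a _ => by rw [pg a])
    have hptw : ∀ d s a, q (d, s, a) * Real.log (q (d, s, a) / bb (d, s, a))
        = q (d, s, a) * Real.log (q (d, s, a)) + q (d, s, a) * Real.log (P1 a)
          - q (d, s, a) * Real.log (piT a d) - q (d, s, a) * Real.log (r s * κθ s a) := by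
      intro d s a
      rcases eq_or_lt_of_le (hq0 (d, s, a)) with h0|h0
      · rw [← h0]; ring
      · obtain ⟨h1, h2, h3, h4, h5⟩ := hposall d s a h0
        have hbbp : 0 < bb (d, s, a) := div_pos (mul_pos h3 h4) h5
        rw [Real.log_div h0.ne' hbbp.ne']
        rw [show bb (d, s, a) = piT a d * (r s * κθ s a) / P1 a from rfl]
        rw [Real.log_div (mul_pos h3 h4).ne' h5.ne', Real.log_mul h3.ne' h4.ne']
        ring
    have hzero : ∑ w, q w * Real.log (q w / bb w) = 0 := by
      simp only [Fintype.sum_prod_type]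
      rw [show (∑ d : Fin T → 𝒳, ∑ s, ∑ a, q (d, s, a) * Real.log (q (d, s, a) / bb (d, s, a)))
          = (∑ d : Fin T → 𝒳, ∑ s, ∑ a, q (d, s, a) * Real.log (q (d, s, a)))
            + (∑ d : Fin T → 𝒳, ∑ s, ∑ a, q (d, s, a) * Real.log (P1 a))
            - (∑ d : Fin T → 𝒳, ∑ s, ∑ a, q (d, s, a) * Real.log (piT a d))
            - (∑ d : Fin T → 𝒳, ∑ s, ∑ a, q (d, s, a) * Real.log (r s * κθ s a)) from by
        rw [show (∑ d : Fin T → 𝒳, ∑ s, ∑ a, q (d, s, a) * Real.log (q (d, s, a) / bb (d, s, a)))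
            = ∑ d : Fin T → 𝒳, ∑ s, ∑ a,
                (q (d, s, a) * Real.log (q (d, s, a)) + q (d, s, a) * Real.log (P1 a)
                  - q (d, s, a) * Real.log (piT a d)
                  - q (d, s, a) * Real.log (r s * κθ s a)) from
          Finset.sum_congr rfl fun d _ => Finset.sum_congr rfl fun s _ =>
            Finset.sum_congr rfl fun a _ => hptw d s a]
        simp only [Finset.sum_sub_distrib, Finset.sum_add_distrib]]
      -- identify the four triple sums with the entropies
      have m1 : (∑ d : Fin T → 𝒳, ∑ s, ∑ a, q (d, s, a) * Real.log (piT a d))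
          = ∑ d : Fin T → 𝒳, ∑ a, piT a d * Real.log (piT a d) := by
        refine Finset.sum_congr rfl fun d _ => ?_
        rw [Finset.sum_comm]
        refine Finset.sum_congr rfl fun a _ => ?_
        rw [show (∑ s, q (d, s, a) * Real.log (piT a d))
            = (∑ s, r s * κ s (a, d)) * Real.log (piT a d) from (Finset.sum_mul _ _ _).symm]
      have m2 : (∑ d : Fin T → 𝒳, ∑ s, ∑ a, q (d, s, a) * Real.log (r s * κθ s a))
          = ∑ s, ∑ a, (r s * κθ s a) * Real.log (r s * κθ s a) := by
        rw [Finset.sum_comm]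
        refine Finset.sum_congr rfl fun s _ => ?_
        rw [Finset.sum_comm]
        refine Finset.sum_congr rfl fun a _ => ?_
        rw [show (∑ d : Fin T → 𝒳, q (d, s, a) * Real.log (r s * κθ s a))
            = (∑ d : Fin T → 𝒳, r s * κ s (a, d)) * Real.log (r s * κθ s a) from
          (Finset.sum_mul _ _ _).symm]
        rw [← Finset.mul_sum]
      have m3 : (∑ d : Fin T → 𝒳, ∑ s, ∑ a, q (d, s, a) * Real.log (P1 a))
          = ∑ a, P1 a * Real.log (P1 a) := by
        rw [show (∑ d : Fin T → 𝒳, ∑ s, ∑ a, q (d, s, a) * Real.log (P1 a))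
            = ∑ d : Fin T → 𝒳, ∑ a, ∑ s, q (d, s, a) * Real.log (P1 a) from
          Finset.sum_congr rfl fun d _ => Finset.sum_comm]
        rw [Finset.sum_comm]
        refine Finset.sum_congr rfl fun a _ => ?_
        rw [show (∑ d : Fin T → 𝒳, ∑ s, q (d, s, a) * Real.log (P1 a))
            = (∑ d : Fin T → 𝒳, ∑ s, r s * κ s (a, d)) * Real.log (P1 a) from by
          rw [Finset.sum_mul]
          exact Finset.sum_congr rfl fun d _ => (Finset.sum_mul _ _ _).symm]
        congr 1
        rw [Finset.sum_comm]
        rw [show (∑ s, ∑ d, r s * κ s (a, d)) = ∑ s, r s * κθ s a from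
          Finset.sum_congr rfl fun s _ => by rw [← Finset.mul_sum]]
      rw [m1, m2, m3]
      rw [e1, e2, e3, e4] at hCIm
      linarith [hCIm]
    have hq_eq : ∀ w, q w = bb w := gibbs_eq q bb hq0 hb0 hdom hbsum hzero
    intro s hrs a d
    have heq := hq_eq (d, s, a)
    rw [hqdef] at heq
    rcases eq_or_lt_of_le (hP10 a) with h0|h0
    · have hκθz : κθ s a = 0 := by
        have hle := hμleP1 s a
        have hnn := mul_nonneg (hr0 s) (hκθ0 s a)
        have : r s * κθ s a = 0 := le_antisymm (by rw [← h0] at hle; exact hle) hnn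
        rcases mul_eq_zero.mp this with h|h
        · exact absurd h hrs.ne'
        · exact h
      have hκz : κ s (a, d) = 0 := by
        have hle := hκleκθ s a d
        have := hκ0 s (a, d)
        rw [hκθz] at hle
        linarith
      rw [hκz, hκθz, zero_mul]
    · have heq2 : r s * κ s (a, d) = piT a d * (r s * κθ s a) / P1 a := heq
      have heq3 : r s * κ s (a, d) = r s * (κθ s a * (piT a d / P1 a)) := by
        rw [heq2]
        field_simp
      have := mul_left_cancel₀ hrs.ne' heq3
      rw [this]

  have hpiT_eq : ∀ a d, piT a d = P1 a * gf a d := by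
    intro a d
    rcases eq_or_lt_of_le (hP10 a) with h0|h0
    · have : piT a d = 0 := by
        have hle : piT a d ≤ P1 a := by
          rw [← hpiTsum a]
          exact Finset.single_le_sum (fun d' _ => hpiT0 a d') (Finset.mem_univ d)
        have := hpiT0 a d
        linarith [hle, h0.symm ▸ (le_refl (0:ℝ))]
      rw [this, ← h0, zero_mul]
    · rw [hgfdef]
      field_simp
  have hgfsum : ∀ a, 0 < P1 a → ∑ d, gf a d = 1 := by
    intro a hpos
    rw [hgfdef, ← Finset.sum_div, hpiTsum a, div_self hpos.ne']
  -- entropy of ψ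
  have hEψ : entropy ψ = -∑ s, r s * Real.log (r s) := rfl
  set J1 : ℝ := -(∑ s, ∑ d, r s * κD s d * Real.log (κD s d)) with hJ1def
  set J2 : ℝ := -(∑ a : Θ, ∑ d, P1 a * gf a d * Real.log (gf a d)) with hJ2def
  set K1 : ℝ := -(∑ s, ∑ a, r s * κθ s a * Real.log (κθ s a)) with hK1def
  -- entropies
  have hE5 : entropy (fun ω => (Harr ω, ψ ω)) = (-∑ s, r s * Real.log (r s)) + (M:ℝ) * J1 := by
    simp only [entropy, Fintype.sum_prod_type]
    rw [show (∑ h : Fin M → Fin T → 𝒳, ∑ s,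
          prob (fun ω => (Harr ω, ψ ω)) (h, s) * Real.log (prob (fun ω => (Harr ω, ψ ω)) (h, s)))
        = ∑ h : Fin M → Fin T → 𝒳, ∑ s,
            (r s * ∏ k, κD s (h k)) * Real.log (r s * ∏ k, κD s (h k)) from
      Finset.sum_congr rfl fun h _ => Finset.sum_congr rfl fun s _ => by rw [pa h s]]
    rw [Finset.sum_comm]
    rw [esplitPi r (fun _ s d => κD s d) hr0 (fun _ s d => hκD0 s d) (fun s _ _ => hκD1 s)]
    rw [Finset.sum_const, Finset.card_univ, Fintype.card_fin, nsmul_eq_mul, hJ1def]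
  have hcondE : condEntropy Harr θv = (M:ℝ) * J2 := by
    have hPθle : ∀ (a : Fin M → Θ) (k : Fin M), Pθ a ≤ P1 (a k) := by
      intro a k
      refine Finset.sum_le_sum fun s _ => ?_
      refine mul_le_mul_of_nonneg_left ?_ (hr0 s)
      rw [← Finset.mul_prod_erase Finset.univ (fun j => κθ s (a j)) (Finset.mem_univ k)]
      exact mul_le_of_le_one_right (hκθ0 s (a k))
        (Finset.prod_le_one (fun j _ => hκθ0 s (a j)) (fun j _ => hκθle s (a j)))
    have hPHθ : ∀ (h : Fin M → Fin T → 𝒳) (a : Fin M → Θ),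
        prob (fun ω => (Harr ω, θv ω)) (h, a) = Pθ a * ∏ k, gf (a k) (h k) := by
      intro h a
      rw [pc h a]
      have hstep : ∀ s, r s * ∏ k, κ s (a k, h k)
          = (r s * ∏ k, κθ s (a k)) * ∏ k, gf (a k) (h k) := by
        intro s
        rcases eq_or_lt_of_le (hr0 s) with h0|h0
        · rw [← h0]; ring
        · rw [Finset.prod_congr rfl fun k (_ : k ∈ Finset.univ) => hfact s h0 (a k) (h k),
            Finset.prod_mul_distrib]
          ring
      rw [Finset.sum_congr rfl fun s _ => hstep s, ← Finset.sum_mul]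
    have hEθv : entropy θv = -∑ a : Fin M → Θ, Pθ a * Real.log (Pθ a) := by
      simp only [entropy]
      exact congrArg Neg.neg (Finset.sum_congr rfl fun a _ => by rw [pb a])
    have hmargPθ : ∀ (G : Θ → ℝ) (k : Fin M),
        (∑ a : Fin M → Θ, Pθ a * G (a k)) = ∑ a : Θ, P1 a * G a := by
      intro G k
      calc (∑ a : Fin M → Θ, Pθ a * G (a k))
          = ∑ a : Fin M → Θ, ∑ s, (r s * ∏ j, κθ s (a j)) * G (a k) := by
            refine Finset.sum_congr rfl fun a _ => ?_
            rw [show Pθ a = ∑ s, r s * ∏ j, κθ s (a j) from rfl, Finset.sum_mul]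
        _ = ∑ s, ∑ a : Fin M → Θ, (∏ j, κθ s (a j)) * ((fun x => G x * r s) (a k)) := by
            rw [Finset.sum_comm]
            exact Finset.sum_congr rfl fun s _ => Finset.sum_congr rfl fun a _ => by ring
        _ = ∑ s, (∑ x, κθ s x * (G x * r s)) * ∏ j ∈ Finset.univ.erase k, (∑ x, κθ s x) := by
            exact Finset.sum_congr rfl fun s _ => marg_pi (fun _ => κθ s) (fun x => G x * r s) k
        _ = ∑ s, ∑ x, κθ s x * (G x * r s) := by
            refine Finset.sum_congr rfl fun s _ => ?_
            rw [Finset.prod_congr rfl fun j (_ : j ∈ Finset.univ.erase k) => hκθ1 s,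
              Finset.prod_const_one, mul_one]
        _ = ∑ x, (∑ s, r s * κθ s x) * G x := by
            rw [Finset.sum_comm]
            refine Finset.sum_congr rfl fun x _ => ?_
            rw [Finset.sum_mul]
            exact Finset.sum_congr rfl fun s _ => by ring
        _ = ∑ a : Θ, P1 a * G a := Finset.sum_congr rfl fun a _ => by rw []
    have hEHθv : entropy (fun ω => (Harr ω, θv ω))
        = (-∑ a : Fin M → Θ, Pθ a * Real.log (Pθ a))
          + ∑ k : Fin M, -(∑ a : Fin M → Θ, ∑ d, Pθ a * gf (a k) d * Real.log (gf (a k) d)) := by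
      simp only [entropy, Fintype.sum_prod_type]
      rw [show (∑ h : Fin M → Fin T → 𝒳, ∑ a : Fin M → Θ,
            prob (fun ω => (Harr ω, θv ω)) (h, a) * Real.log (prob (fun ω => (Harr ω, θv ω)) (h, a)))
          = ∑ h : Fin M → Fin T → 𝒳, ∑ a : Fin M → Θ,
              (Pθ a * ∏ k, gf (a k) (h k)) * Real.log (Pθ a * ∏ k, gf (a k) (h k)) from
        Finset.sum_congr rfl fun h _ => Finset.sum_congr rfl fun a _ => by rw [hPHθ h a]]
      rw [Finset.sum_comm]
      rw [esplitPi (δ := Fin T → 𝒳) Pθ (fun k a d => gf (a k) d) hPθ0 (fun k a d => hgf0 (a k) d)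
        (fun a hpos k => hgfsum (a k) (lt_of_lt_of_le hpos (hPθle a k)))]
    rw [condEntropy, hEHθv, hEθv]
    rw [show (∑ k : Fin M, -(∑ a : Fin M → Θ, ∑ d, Pθ a * gf (a k) d * Real.log (gf (a k) d)))
        = ∑ k : Fin M, -(∑ a : Θ, ∑ d, P1 a * gf a d * Real.log (gf a d)) from ?_]
    · rw [Finset.sum_const, Finset.card_univ, Fintype.card_fin, nsmul_eq_mul, hJ2def]
      ring
    refine Finset.sum_congr rfl fun k _ => congrArg Neg.neg ?_
    calc (∑ a : Fin M → Θ, ∑ d, Pθ a * gf (a k) d * Real.log (gf (a k) d))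
        = ∑ a : Fin M → Θ, Pθ a * ((fun x => ∑ d, gf x d * Real.log (gf x d)) (a k)) := by
          refine Finset.sum_congr rfl fun a _ => ?_
          rw [Finset.mul_sum]
          exact Finset.sum_congr rfl fun d _ => by ring
      _ = ∑ a : Θ, P1 a * ∑ d, gf a d * Real.log (gf a d) :=
          hmargPθ (fun x => ∑ d, gf x d * Real.log (gf x d)) k
      _ = ∑ a : Θ, ∑ d, P1 a * gf a d * Real.log (gf a d) := by
          refine Finset.sum_congr rfl fun a _ => ?_
          rw [Finset.mul_sum]
          exact Finset.sum_congr rfl fun d _ => by ring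
  have hE10 : entropy (fun ω => (Dm ω, ψ ω)) = (-∑ s, r s * Real.log (r s)) + J1 := by
    simp only [entropy, Fintype.sum_prod_type]
    rw [show (∑ d : Fin T → 𝒳, ∑ s,
          prob (fun ω => (Dm ω, ψ ω)) (d, s) * Real.log (prob (fun ω => (Dm ω, ψ ω)) (d, s)))
        = ∑ d : Fin T → 𝒳, ∑ s, (r s * κD s d) * Real.log (r s * κD s d) from
      Finset.sum_congr rfl fun d _ => Finset.sum_congr rfl fun s _ => by rw [ph d s]]
    rw [Finset.sum_comm]
    rw [esplit2 r κD hr0 hκD0 (fun s _ => hκD1 s), hJ1def]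
  have hE11 : entropy (fun ω => (θ m ω, ψ ω)) = (-∑ s, r s * Real.log (r s)) + K1 := by
    simp only [entropy, Fintype.sum_prod_type]
    rw [show (∑ a : Θ, ∑ s,
          prob (fun ω => (θ m ω, ψ ω)) (a, s) * Real.log (prob (fun ω => (θ m ω, ψ ω)) (a, s)))
        = ∑ a : Θ, ∑ s, (r s * κθ s a) * Real.log (r s * κθ s a) from
      Finset.sum_congr rfl fun a _ => Finset.sum_congr rfl fun s _ => by rw [pi' a s]]
    rw [Finset.sum_comm]
    rw [esplit2 r (fun s a => κθ s a) hr0 hκθ0 (fun s _ => hκθ1 s), hK1def]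
  have hE12 : entropy (fun ω => (Dm ω, θ m ω, ψ ω)) = (-∑ s, r s * Real.log (r s)) + (K1 + J2) := by
    have hκ1' : ∀ s, ∑ u : (Fin T → 𝒳) × Θ, κ s (u.2, u.1) = 1 := by
      intro s
      rw [Fintype.sum_prod_type, Finset.sum_comm, ← Fintype.sum_prod_type]
      exact hκ1 s
    have hsplitptw : ∀ s a d, r s * κ s (a, d) * Real.log (κ s (a, d))
        = r s * κ s (a, d) * Real.log (κθ s a) + r s * κ s (a, d) * Real.log (gf a d) := by
      intro s a d
      rcases eq_or_lt_of_le (hr0 s) with h0|h0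
      · rw [← h0]; ring
      rcases eq_or_lt_of_le (hκ0 s (a, d)) with h1|h1
      · rw [← h1]; ring
      · have hfa := hfact s h0 a d
        have hpos2 : 0 < κθ s a ∧ 0 < gf a d := by
          rw [hfa] at h1
          rcases mul_pos_iff.mp h1 with hx|hx
          · exact hx
          · exact absurd hx.1 (not_lt.mpr (hκθ0 s a))
        rw [hfa, Real.log_mul hpos2.1.ne' hpos2.2.ne']
        ring
    have keyK2 : (∑ s, ∑ u : (Fin T → 𝒳) × Θ, r s * κ s (u.2, u.1) * Real.log (κ s (u.2, u.1)))
        = (∑ s, ∑ a, r s * κθ s a * Real.log (κθ s a))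
          + (∑ a : Θ, ∑ d, P1 a * gf a d * Real.log (gf a d)) := by
      calc (∑ s, ∑ u : (Fin T → 𝒳) × Θ, r s * κ s (u.2, u.1) * Real.log (κ s (u.2, u.1)))
          = ∑ s, ∑ d : Fin T → 𝒳, ∑ a, (r s * κ s (a, d) * Real.log (κθ s a)
              + r s * κ s (a, d) * Real.log (gf a d)) := by
            simp only [Fintype.sum_prod_type]
            exact Finset.sum_congr rfl fun s _ => Finset.sum_congr rfl fun d _ =>
              Finset.sum_congr rfl fun a _ => hsplitptw s a d
        _ = (∑ s, ∑ d : Fin T → 𝒳, ∑ a, r s * κ s (a, d) * Real.log (κθ s a))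
            + (∑ s, ∑ d : Fin T → 𝒳, ∑ a, r s * κ s (a, d) * Real.log (gf a d)) := by
            simp only [Finset.sum_add_distrib]
        _ = (∑ s, ∑ a, r s * κθ s a * Real.log (κθ s a))
            + (∑ a : Θ, ∑ d, P1 a * gf a d * Real.log (gf a d)) := by
            congr 1
            · refine Finset.sum_congr rfl fun s _ => ?_
              rw [Finset.sum_comm]
              refine Finset.sum_congr rfl fun a _ => ?_
              rw [show (∑ d : Fin T → 𝒳, r s * κ s (a, d) * Real.log (κθ s a))
                  = (∑ d : Fin T → 𝒳, κ s (a, d)) * (r s * Real.log (κθ s a)) from by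
                rw [Finset.sum_mul]
                exact Finset.sum_congr rfl fun d _ => by ring]
              rw [show (∑ d : Fin T → 𝒳, κ s (a, d)) = κθ s a from rfl]
              ring
            · rw [show (∑ s, ∑ d : Fin T → 𝒳, ∑ a, r s * κ s (a, d) * Real.log (gf a d))
                  = ∑ a, ∑ d : Fin T → 𝒳, ∑ s, r s * κ s (a, d) * Real.log (gf a d) from by
                rw [show (∑ s, ∑ d : Fin T → 𝒳, ∑ a, r s * κ s (a, d) * Real.log (gf a d))
                    = ∑ s, ∑ a, ∑ d : Fin T → 𝒳, r s * κ s (a, d) * Real.log (gf a d) from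
                  Finset.sum_congr rfl fun s _ => Finset.sum_comm]
                rw [show (∑ s, ∑ a, ∑ d : Fin T → 𝒳, r s * κ s (a, d) * Real.log (gf a d))
                    = ∑ a, ∑ s, ∑ d : Fin T → 𝒳, r s * κ s (a, d) * Real.log (gf a d) from
                  Finset.sum_comm]
                exact Finset.sum_congr rfl fun a _ => Finset.sum_comm]
              refine Finset.sum_congr rfl fun a _ => Finset.sum_congr rfl fun d _ => ?_
              rw [show (∑ s, r s * κ s (a, d) * Real.log (gf a d))
                  = (∑ s, r s * κ s (a, d)) * Real.log (gf a d) from (Finset.sum_mul _ _ _).symm]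
              rw [show (∑ s, r s * κ s (a, d)) = piT a d from rfl, hpiT_eq a d]
    simp only [entropy, Fintype.sum_prod_type]
    rw [show (∑ d : Fin T → 𝒳, ∑ a : Θ, ∑ s, prob (fun ω => (Dm ω, θ m ω, ψ ω)) (d, a, s)
          * Real.log (prob (fun ω => (Dm ω, θ m ω, ψ ω)) (d, a, s)))
        = ∑ d : Fin T → 𝒳, ∑ a : Θ, ∑ s, (r s * κ s (a, d)) * Real.log (r s * κ s (a, d)) from
      Finset.sum_congr rfl fun d _ => Finset.sum_congr rfl fun a _ =>
        Finset.sum_congr rfl fun s _ => by rw [pj d a s]]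
    rw [show (∑ d : Fin T → 𝒳, ∑ a : Θ, ∑ s, (r s * κ s (a, d)) * Real.log (r s * κ s (a, d)))
        = ∑ s, ∑ u : (Fin T → 𝒳) × Θ, (r s * κ s (u.2, u.1)) * Real.log (r s * κ s (u.2, u.1)) from by
      simp only [Fintype.sum_prod_type]
      rw [show (∑ d : Fin T → 𝒳, ∑ a : Θ, ∑ s, (r s * κ s (a, d)) * Real.log (r s * κ s (a, d)))
          = ∑ d : Fin T → 𝒳, ∑ s, ∑ a : Θ, (r s * κ s (a, d)) * Real.log (r s * κ s (a, d)) from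
        Finset.sum_congr rfl fun d _ => Finset.sum_comm]
      exact Finset.sum_comm]
    rw [esplit2 (δ := (Fin T → 𝒳) × Θ) r (fun s u => κ s (u.2, u.1)) hr0 (fun s u => hκ0 s (u.2, u.1))
      (fun s _ => hκ1' s)]
    rw [keyK2, hK1def, hJ2def]
    ring
  have hcmi : condMutualInfo Dm (θ m) ψ = J1 - J2 := by
    rw [condMutualInfo, hE10, hE11, hE12, hEψ]
    ring
  have hmut : mutualInfo Harr ψ = entropy Harr - (M:ℝ) * J1 := by
    rw [mutualInfo, hE5, hEψ]
    ring
  -- left-hand side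
  have hLHS : (∑ m' : Fin M, ∑ t : Fin T,
      ∫ ω, -Real.log
          ((ν {g : Fin M → Fin T → 𝒳 |
                ((∀ j : Fin M, j < m' → ∀ s : Fin T, g j s = X j s ω) ∧
                 (∀ s : Fin T, s < t → g m' s = X m' s ω)) ∧
                g m' t = X m' t ω}).toReal /
           (ν {g : Fin M → Fin T → 𝒳 |
                (∀ j : Fin M, j < m' → ∀ s : Fin T, g j s = X j s ω) ∧
                (∀ s : Fin T, s < t → g m' s = X m' s ω)}).toReal) ∂ℙ)
      = entropy Harr + klFin (fun h => prob Harr h) (fun h => (ν {h}).toReal) := by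
    set Floss : Fin M → Fin T → (Fin M → Fin T → 𝒳) → ℝ := fun m' t h => -Real.log
          ((ν {g : Fin M → Fin T → 𝒳 |
                ((∀ j : Fin M, j < m' → ∀ s : Fin T, g j s = h j s) ∧
                 (∀ s : Fin T, s < t → g m' s = h m' s)) ∧
                g m' t = h m' t}).toReal /
           (ν {g : Fin M → Fin T → 𝒳 |
                (∀ j : Fin M, j < m' → ∀ s : Fin T, g j s = h j s) ∧
                (∀ s : Fin T, s < t → g m' s = h m' s)}).toReal) with hFlossdef
    have htel : ∀ h : Fin M → Fin T → 𝒳, 0 < prob Harr h →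
        (∑ m' : Fin M, ∑ t : Fin T, Floss m' t h) = -Real.log ((ν {h}).toReal) := by
      intro h hh
      have hν : 0 < ν {h} := hsupp h hh
      set Cn : ℕ → Set (Fin M → Fin T → 𝒳) :=
        fun n => {g | ∀ (j : Fin M) (s : Fin T), (j:ℕ)*T + (s:ℕ) < n → g j s = h j s} with hCndef
      have hsub : ∀ n, ({h} : Set (Fin M → Fin T → 𝒳)) ⊆ Cn n := by
        intro n g hg j s _
        rw [Set.mem_singleton_iff.mp hg]
      have hpos : ∀ n, 0 < (ν (Cn n)).toReal := by
        intro n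
        exact ENNReal.toReal_pos (lt_of_lt_of_le hν (measure_mono (hsub n))).ne'
          (measure_ne_top ν _)
      have harith : ∀ (m' j : Fin M) (t s : Fin T),
          ((j:ℕ)*T + (s:ℕ) < (m':ℕ)*T + (t:ℕ)) ↔ (j < m' ∨ (j = m' ∧ s < t)) := by
        intro m' j t s
        constructor
        · intro hlt
          rcases lt_trichotomy (j:ℕ) (m':ℕ) with hc|hc|hc
          · exact Or.inl hc
          · refine Or.inr ⟨Fin.ext hc, ?_⟩
            have hx : (j:ℕ)*T = (m':ℕ)*T := by rw [hc]
            rw [hx] at hlt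
            exact Fin.lt_def.mpr (by exact lt_of_add_lt_add_left hlt)
          · exfalso
            have h2 : ((m':ℕ)+1)*T ≤ (j:ℕ)*T := Nat.mul_le_mul_right T hc
            rw [Nat.succ_mul] at h2
            have c1 : (m':ℕ)*T + (t:ℕ) < (m':ℕ)*T + T := Nat.add_lt_add_left t.isLt _
            exact Nat.lt_irrefl _ (lt_trans hlt
              (lt_of_lt_of_le c1 (le_trans h2 (Nat.le_add_right _ _))))
        · intro hc
          rcases hc with hc|⟨hc, hst⟩
          · have h2 : ((j:ℕ)+1)*T ≤ (m':ℕ)*T := Nat.mul_le_mul_right T hc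
            rw [Nat.succ_mul] at h2
            have c1 : (j:ℕ)*T + (s:ℕ) < (j:ℕ)*T + T := Nat.add_lt_add_left s.isLt _
            exact lt_of_lt_of_le (lt_of_lt_of_le c1 h2) (Nat.le_add_right _ _)
          · rw [hc]
            exact Nat.add_lt_add_left hst _
      have harith2 : ∀ (m' j : Fin M) (t s : Fin T),
          ((j:ℕ)*T + (s:ℕ) < (m':ℕ)*T + (t:ℕ) + 1)
            ↔ (j < m' ∨ (j = m' ∧ s < t) ∨ (j = m' ∧ s = t)) := by
        intro m' j t s
        constructor
        · intro hlt
          rcases lt_trichotomy (j:ℕ) (m':ℕ) with hc|hc|hc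
          · exact Or.inl hc
          · have hx : (j:ℕ)*T = (m':ℕ)*T := by rw [hc]
            rw [hx, Nat.add_assoc] at hlt
            have hst : (s:ℕ) < (t:ℕ) + 1 := lt_of_add_lt_add_left hlt
            rcases Nat.lt_succ_iff_lt_or_eq.mp hst with h'|h'
            · exact Or.inr (Or.inl ⟨Fin.ext hc, h'⟩)
            · exact Or.inr (Or.inr ⟨Fin.ext hc, Fin.ext h'⟩)
          · exfalso
            have h2 : ((m':ℕ)+1)*T ≤ (j:ℕ)*T := Nat.mul_le_mul_right T hc
            rw [Nat.succ_mul] at h2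
            have c1 : (m':ℕ)*T + ((t:ℕ)+1) ≤ (m':ℕ)*T + T := Nat.add_le_add_left t.isLt _
            rw [← Nat.add_assoc] at c1
            exact Nat.lt_irrefl _ (lt_of_lt_of_le hlt
              (le_trans (le_trans c1 h2) (Nat.le_add_right _ _)))
        · intro hc
          rcases hc with hc|⟨hc, hst⟩|⟨hc, hst⟩
          · have h2 : ((j:ℕ)+1)*T ≤ (m':ℕ)*T := Nat.mul_le_mul_right T hc
            rw [Nat.succ_mul] at h2
            have c1 : (j:ℕ)*T + (s:ℕ) < (j:ℕ)*T + T := Nat.add_lt_add_left s.isLt _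
            exact lt_of_lt_of_le (lt_of_lt_of_le c1 h2)
              (Nat.le_succ_of_le (Nat.le_add_right _ _))
          · rw [hc]
            exact lt_trans (Nat.add_lt_add_left hst _) (Nat.lt_succ_self _)
          · rw [hc, show (s:ℕ) = (t:ℕ) from congrArg Fin.val hst]
            exact Nat.lt_succ_self _
      have hCeq : ∀ (m' : Fin M) (t : Fin T),
          {g : Fin M → Fin T → 𝒳 | (∀ j : Fin M, j < m' → ∀ s : Fin T, g j s = h j s) ∧
            (∀ s : Fin T, s < t → g m' s = h m' s)} = Cn ((m':ℕ)*T + (t:ℕ)) := by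
        intro m' t
        ext g
        simp only [Set.mem_setOf_eq, hCndef]
        constructor
        · rintro ⟨h1, h2⟩ j s hjs
          rcases (harith m' j t s).mp hjs with hc|⟨hc, hst⟩
          · exact h1 j hc s
          · rw [hc]
            exact h2 s hst
        · intro hg
          refine ⟨fun j hj s => hg j s ((harith m' j t s).mpr (Or.inl hj)),
            fun s hs => hg m' s ((harith m' m' t s).mpr (Or.inr ⟨rfl, hs⟩))⟩
      have hFeq : ∀ (m' : Fin M) (t : Fin T),
          {g : Fin M → Fin T → 𝒳 | ((∀ j : Fin M, j < m' → ∀ s : Fin T, g j s = h j s) ∧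
            (∀ s : Fin T, s < t → g m' s = h m' s)) ∧ g m' t = h m' t}
          = Cn ((m':ℕ)*T + (t:ℕ) + 1) := by
        intro m' t
        ext g
        simp only [Set.mem_setOf_eq, hCndef]
        constructor
        · rintro ⟨⟨h1, h2⟩, h3⟩ j s hjs
          rcases (harith2 m' j t s).mp hjs with hc|⟨hc, hst⟩|⟨hc, hst⟩
          · exact h1 j hc s
          · rw [hc]
            exact h2 s hst
          · rw [hc, hst]
            exact h3
        · intro hg
          exact ⟨⟨fun j hj s => hg j s ((harith2 m' j t s).mpr (Or.inl hj)),
            fun s hs => hg m' s ((harith2 m' m' t s).mpr (Or.inr (Or.inl ⟨rfl, hs⟩)))⟩,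
            hg m' t ((harith2 m' m' t t).mpr (Or.inr (Or.inr ⟨rfl, rfl⟩)))⟩
      have hFloss : ∀ (m' : Fin M) (t : Fin T), Floss m' t h
          = Real.log ((ν (Cn ((m':ℕ)*T + (t:ℕ)))).toReal)
            - Real.log ((ν (Cn ((m':ℕ)*T + (t:ℕ) + 1))).toReal) := by
        intro m' t
        rw [show Floss m' t h = -Real.log
            ((ν {g : Fin M → Fin T → 𝒳 |
                ((∀ j : Fin M, j < m' → ∀ s : Fin T, g j s = h j s) ∧
                 (∀ s : Fin T, s < t → g m' s = h m' s)) ∧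
                g m' t = h m' t}).toReal /
             (ν {g : Fin M → Fin T → 𝒳 |
                (∀ j : Fin M, j < m' → ∀ s : Fin T, g j s = h j s) ∧
                (∀ s : Fin T, s < t → g m' s = h m' s)}).toReal) from rfl]
        rw [hCeq m' t, hFeq m' t, Real.log_div (hpos _).ne' (hpos _).ne']
        ring
      rw [Finset.sum_congr rfl fun m' _ => Finset.sum_congr rfl fun t _ => hFloss m' t]
      have hinner : ∀ m' : Fin M,
          (∑ t : Fin T, (Real.log ((ν (Cn ((m':ℕ)*T + (t:ℕ)))).toReal)
            - Real.log ((ν (Cn ((m':ℕ)*T + (t:ℕ) + 1))).toReal)))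
          = Real.log ((ν (Cn ((m':ℕ)*T))).toReal) - Real.log ((ν (Cn ((m':ℕ)*T + T))).toReal) := by
        intro m'
        rw [Fin.sum_univ_eq_sum_range (fun i => Real.log ((ν (Cn ((m':ℕ)*T + i))).toReal)
          - Real.log ((ν (Cn ((m':ℕ)*T + i + 1))).toReal)) T]
        simp only [Nat.add_assoc]
        rw [Finset.sum_range_sub' (fun i => Real.log ((ν (Cn ((m':ℕ)*T + i))).toReal)) T]
        rw [Nat.add_zero]
      rw [Finset.sum_congr rfl fun m' _ => hinner m']
      have houter : (∑ m' : Fin M, (Real.log ((ν (Cn ((m':ℕ)*T))).toReal)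
            - Real.log ((ν (Cn ((m':ℕ)*T + T))).toReal)))
          = Real.log ((ν (Cn 0)).toReal) - Real.log ((ν (Cn (M*T))).toReal) := by
        rw [Fin.sum_univ_eq_sum_range (fun i => Real.log ((ν (Cn (i*T))).toReal)
          - Real.log ((ν (Cn (i*T + T))).toReal)) M]
        rw [show (fun i : ℕ => Real.log ((ν (Cn (i*T))).toReal)
              - Real.log ((ν (Cn (i*T + T))).toReal))
            = (fun i : ℕ => Real.log ((ν (Cn (i*T))).toReal)
              - Real.log ((ν (Cn ((i+1)*T))).toReal)) from
          funext fun i => by rw [Nat.succ_mul]]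
        rw [Finset.sum_range_sub' (fun i => Real.log ((ν (Cn (i*T))).toReal)) M]
        rw [Nat.zero_mul]
      rw [houter]
      have hC0 : Cn 0 = Set.univ := by
        ext g
        simp [hCndef]
      have hCMT : Cn (M*T) = {h} := by
        ext g
        simp only [hCndef, Set.mem_setOf_eq, Set.mem_singleton_iff]
        constructor
        · intro hg
          funext j s
          apply hg
          have h2 : ((j:ℕ)+1)*T ≤ M*T := Nat.mul_le_mul_right T j.isLt
          rw [Nat.succ_mul] at h2
          exact lt_of_lt_of_le (Nat.add_lt_add_left s.isLt _) h2
        · intro hg j s _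
          rw [hg]
      rw [hC0, hCMT]
      rw [show (ν Set.univ) = 1 from measure_univ, ENNReal.toReal_one, Real.log_one]
      ring
    trans (∑ h : Fin M → Fin T → 𝒳, prob Harr h * (-Real.log ((ν {h}).toReal)))
    · refine Eq.trans (Finset.sum_congr rfl fun m' _ => Finset.sum_congr rfl fun t _ =>
        integral_comp Harr hHm (Floss m' t)) ?_
      refine Eq.trans (Finset.sum_congr rfl fun m' _ => Finset.sum_comm) ?_
      refine Eq.trans Finset.sum_comm ?_
      refine Finset.sum_congr rfl fun h _ => ?_
      rcases eq_or_lt_of_le (prob_nonneg' Harr h) with h0|h0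
      · rw [← h0]
        simp
      · rw [← htel h h0, Finset.mul_sum]
        exact Finset.sum_congr rfl fun m' _ => (Finset.mul_sum _ _ _).symm
    · simp only [entropy, klFin]
      rw [← Finset.sum_neg_distrib, ← Finset.sum_add_distrib]
      refine Finset.sum_congr rfl fun h _ => ?_
      rcases eq_or_lt_of_le (prob_nonneg' Harr h) with h0|h0
      · rw [← h0]
        simp
      · have hν' : 0 < (ν {h}).toReal :=
          ENNReal.toReal_pos (hsupp h h0).ne' (measure_ne_top ν _)
        rw [Real.log_div h0.ne' hν'.ne']
        ring
  rw [hLHS, hcondE, hmut, hcmi]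
  field_simp
  ring
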